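/- Let A, B ∈ ℝ^{3×3} with all singular values of A in [1−ε, 1+ε] and all singular values of B in [1−ε, 1+ε] (for 0 ≤ ε < 1), and suppose det(A) > 0 and det(B) < 0. Then ‖A − B‖_F ≥ 2 − 2ε. -/

import Mathlib

open Matrix

lemma quad_ge {n : Type*} [Fintype n] [DecidableEq n] {M : Matrix n n ℝ}
    (hM : M.IsHermitian) {c : ℝ} (h : ∀ j, c ≤ hM.eigenvalues j) (v : n → ℝ) :
    c * (v ⬝ᵥ v) ≤ v ⬝ᵥ (M *ᵥ v) := by
  set U : Matrix n n ℝ := (hM.eigenvectorUnitary : Matrix n n ℝ) with hU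
  have hUU : U * star U = 1 := (Matrix.mem_unitaryGroup_iff).mp (hM.eigenvectorUnitary).2
  have hps : (M - c • (1 : Matrix n n ℝ)).PosSemidef := by
    have hrw : M - c • (1 : Matrix n n ℝ) =
        U * (diagonal (fun i => hM.eigenvalues i - c)) * star U := by
      have hd : (diagonal (fun i => hM.eigenvalues i - c) : Matrix n n ℝ)
          = diagonal (RCLike.ofReal ∘ hM.eigenvalues) - c • 1 := by
        rw [smul_one_eq_diagonal, ← diagonal_sub]
        rfl
      have hs := hM.spectral_theorem
      simp only [Unitary.conjStarAlgAut_apply, Unitary.coe_star, ← hU] at hs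
      rw [hd, Matrix.mul_sub, Matrix.sub_mul, ← hs]
      congr 1
      rw [Matrix.mul_smul, Matrix.smul_mul, mul_one, hUU]
    rw [hrw]
    exact (posSemidef_diagonal_iff.mpr (fun i => sub_nonneg.mpr (h i))).mul_mul_conjTranspose_same _
  have h2 := hps.dotProduct_mulVec_nonneg v
  simp only [star_trivial, sub_mulVec, smul_mulVec, one_mulVec, dotProduct_sub,
    dotProduct_smul, smul_eq_mul] at h2
  linarith

lemma sv_quad {A : Matrix (Fin 3) (Fin 3) ℝ} (hA : (Aᴴ * A).IsHermitian) {c : ℝ}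
    (h : ∀ j, c ≤ hA.eigenvalues j) (v : Fin 3 → ℝ) :
    c * (v ⬝ᵥ v) ≤ (A *ᵥ v) ⬝ᵥ (A *ᵥ v) := by
  have := quad_ge hA h v
  rwa [← mulVec_mulVec, dotProduct_mulVec, conjTranspose_eq_transpose_of_trivial,
    Matrix.vecMul_transpose] at this

theorem stmt12 (A B : Matrix (Fin 3) (Fin 3) ℝ) (ε : ℝ) (hε0 : 0 ≤ ε) (hε1 : ε < 1)
    (hA : (Aᴴ * A).IsHermitian) (hB : (Bᴴ * B).IsHermitian)
    (hAsv : ∀ j, (1 - ε) ^ 2 ≤ hA.eigenvalues j ∧ hA.eigenvalues j ≤ (1 + ε) ^ 2)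
    (hBsv : ∀ j, (1 - ε) ^ 2 ≤ hB.eigenvalues j ∧ hB.eigenvalues j ≤ (1 + ε) ^ 2)
    (hdetA : 0 < A.det) (hdetB : B.det < 0) :
    2 - 2 * ε ≤ Real.sqrt (∑ i, ∑ j, (A i j - B i j) ^ 2) := by
  set S : ℝ := ∑ i, ∑ j, (A i j - B i j) ^ 2 with hS
  have hSnn : 0 ≤ S := by rw [hS]; positivity
  rw [show (2 : ℝ) - 2*ε = 2*(1-ε) by ring]
  rw [Real.le_sqrt (by linarith) hSnn]
  -- IVT
  have hf : Continuous fun t : ℝ => ((1-t) • A + t • B).det := by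
    apply Continuous.matrix_det
    fun_prop
  obtain ⟨t, ht01, htz⟩ : ∃ t ∈ Set.Icc (0:ℝ) 1, ((1-t) • A + t • B).det = 0 := by
    have hiv := intermediate_value_Icc' (zero_le_one (α := ℝ)) hf.continuousOn
    have h0 : (0:ℝ) ∈ Set.Icc ((fun t : ℝ => ((1-t) • A + t • B).det) 1)
        ((fun t : ℝ => ((1-t) • A + t • B).det) 0) := by
      simp only [sub_self, sub_zero, zero_smul, one_smul, add_zero, zero_add]
      exact ⟨le_of_lt hdetB, le_of_lt hdetA⟩
    obtain ⟨t, ht, htz⟩ := hiv h0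
    exact ⟨t, ht, htz⟩
  obtain ⟨v, hv0, hCv⟩ : ∃ v ≠ 0, ((1-t) • A + t • B) *ᵥ v = 0 :=
    (Matrix.exists_mulVec_eq_zero_iff).mpr htz
  have hCv' : (1-t) • (A *ᵥ v) + t • (B *ᵥ v) = 0 := by
    simpa [add_mulVec, smul_mulVec] using hCv
  have haD : A *ᵥ v = t • (A *ᵥ v - B *ᵥ v) := by
    linear_combination (norm := module) hCv'
  have hbD : B *ᵥ v = (t - 1) • (A *ᵥ v - B *ᵥ v) := by
    linear_combination (norm := module) hCv'
  set d : Fin 3 → ℝ := A *ᵥ v - B *ᵥ v with hd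
  set nd : ℝ := d ⬝ᵥ d with hnd
  have hndnn : 0 ≤ nd := by
    rw [hnd, dotProduct]
    exact Finset.sum_nonneg fun i _ => mul_self_nonneg _
  have hnv : 0 < v ⬝ᵥ v := by
    obtain ⟨i, hi⟩ := Function.ne_iff.mp hv0
    rw [dotProduct]
    exact Finset.sum_pos' (fun j _ => mul_self_nonneg _)
      ⟨i, Finset.mem_univ i, mul_self_pos.mpr hi⟩
  have hna : (A *ᵥ v) ⬝ᵥ (A *ᵥ v) = t^2 * nd := by
    rw [haD, smul_dotProduct, dotProduct_smul, smul_eq_mul, smul_eq_mul, hnd]; ring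
  have hnb : (B *ᵥ v) ⬝ᵥ (B *ᵥ v) = (t-1)^2 * nd := by
    rw [hbD, smul_dotProduct, dotProduct_smul, smul_eq_mul, smul_eq_mul, hnd]; ring
  have hAq : (1-ε)^2 * (v ⬝ᵥ v) ≤ t^2 * nd := by
    rw [← hna]; exact sv_quad hA (fun j => (hAsv j).1) v
  have hBq : (1-ε)^2 * (v ⬝ᵥ v) ≤ (t-1)^2 * nd := by
    rw [← hnb]; exact sv_quad hB (fun j => (hBsv j).1) v
  have hCS : nd ≤ S * (v ⬝ᵥ v) := by
    have hterm : ∀ i, d i * d i ≤ (∑ j, (A i j - B i j)^2) * (v ⬝ᵥ v) := by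
      intro i
      have h1 := Finset.sum_mul_sq_le_sq_mul_sq Finset.univ (fun j => A i j - B i j) v
      have h2 : d i = ∑ j, (A i j - B i j) * v j := by
        simp [hd, Matrix.mulVec, dotProduct, Matrix.sub_apply, sub_mul,
          Finset.sum_sub_distrib]
      rw [h2, dotProduct]
      calc (∑ j, (A i j - B i j) * v j) * (∑ j, (A i j - B i j) * v j)
          = (∑ j, (A i j - B i j) * v j)^2 := by ring
        _ ≤ (∑ j, (A i j - B i j)^2) * (∑ j, v j ^2) := h1
        _ = (∑ j, (A i j - B i j)^2) * (∑ j, v j * v j) := by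
            congr 1; exact Finset.sum_congr rfl fun j _ => by ring
    rw [hnd, dotProduct, hS, Finset.sum_mul]
    exact Finset.sum_le_sum fun i _ => hterm i
  obtain ⟨ht0, ht1⟩ := ht01
  rcases le_or_gt t (1/2) with hth | hth
  · have h1 : t^2 * nd ≤ (1/4) * (S * (v ⬝ᵥ v)) := by
      nlinarith [mul_le_mul_of_nonneg_left hCS (sq_nonneg t),
        mul_le_mul_of_nonneg_right (show t^2 ≤ 1/4 by nlinarith)
          (mul_nonneg hSnn hnv.le)]
    have key : 4*(1-ε)^2 * (v ⬝ᵥ v) ≤ S * (v ⬝ᵥ v) := by linarith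
    have h4 := (mul_le_mul_iff_of_pos_right hnv).mp key
    nlinarith
  · have h1 : (t-1)^2 * nd ≤ (1/4) * (S * (v ⬝ᵥ v)) := by
      nlinarith [mul_le_mul_of_nonneg_left hCS (sq_nonneg (t-1)),
        mul_le_mul_of_nonneg_right (show (t-1)^2 ≤ 1/4 by nlinarith)
          (mul_nonneg hSnn hnv.le)]
    have key : 4*(1-ε)^2 * (v ⬝ᵥ v) ≤ S * (v ⬝ᵥ v) := by linarith
    have h4 := (mul_le_mul_iff_of_pos_right hnv).mp key
    nlinarith
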